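/- (Proposition 2: bounded policy discrepancy induces bounded state distribution discrepancy.) In a finite two-player Markov game with discount factor γ ∈ [0,1) and initial distribution ρ, fix ε_π ∈ [0,1] and a victim policy π̂_ν, and let π_α, π̂_α be two attacker policies with D_TV^max(π_α, π̂_α) ≤ ε_π. Then ‖d_ρ^{π̂_ν, π̂_α} - d_ρ^{π̂_ν, π_α}‖₁ ≤ 2γε_π / (1-γ). -/

import Mathlib

open scoped BigOperators
open Matrix

/-- The state-transition matrix induced by a joint policy. -/
noncomputable def inducedMatrix {S Av Aa : Type*} [Fintype Av] [Fintype Aa]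
    (P : S → Av → Aa → S → ℝ) (pinu : S → Av → ℝ) (pialpha : S → Aa → ℝ) :
    Matrix S S ℝ :=
  Matrix.of fun s' s => ∑ av, ∑ aa, pinu s av * pialpha s aa * P s av aa s'

/-- The stationary state visitation `d_ρ = (1-γ) ∑_t γ^t P^t ρ`. -/
noncomputable def stateVisitation {S Av Aa : Type*} [Fintype S] [DecidableEq S]
    [Fintype Av] [Fintype Aa]
    (P : S → Av → Aa → S → ℝ) (γ : ℝ) (ρ : S → ℝ)
    (pinu : S → Av → ℝ) (pialpha : S → Aa → ℝ) : S → ℝ :=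
  (1 - γ) • ∑' t : ℕ, γ ^ t • ((inducedMatrix P pinu pialpha ^ t) *ᵥ ρ)

section helpers

variable {S : Type*} [Fintype S]

/-- ℓ¹ contraction for column-stochastic matrices. -/
lemma l1_contract (K : Matrix S S ℝ) (hK0 : ∀ s' s, 0 ≤ K s' s)
    (hK1 : ∀ s, ∑ s', K s' s = 1) (x : S → ℝ) :
    ∑ s, |(K *ᵥ x) s| ≤ ∑ s, |x s| := by
  calc ∑ s, |(K *ᵥ x) s| ≤ ∑ s, ∑ s', K s s' * |x s'| := by
        refine Finset.sum_le_sum fun s _ => ?_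
        refine (Finset.abs_sum_le_sum_abs _ _).trans ?_
        refine Finset.sum_le_sum fun s' _ => ?_
        rw [abs_mul, abs_of_nonneg (hK0 s s')]
    _ = ∑ s', (∑ s, K s s') * |x s'| := by
        rw [Finset.sum_comm]; simp [Finset.sum_mul]
    _ = ∑ s', |x s'| := by simp [hK1]

/-- ℓ¹ operator bound via column absolute sums. -/
lemma l1_bound (D : Matrix S S ℝ) (c : ℝ) (hD : ∀ s, ∑ s', |D s' s| ≤ c) (x : S → ℝ) :
    ∑ s, |(D *ᵥ x) s| ≤ c * ∑ s, |x s| := by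
  calc ∑ s, |(D *ᵥ x) s| ≤ ∑ s, ∑ s', |D s s'| * |x s'| := by
        refine Finset.sum_le_sum fun s _ => ?_
        refine (Finset.abs_sum_le_sum_abs _ _).trans ?_
        refine Finset.sum_le_sum fun s' _ => le_of_eq (abs_mul _ _)
    _ = ∑ s', (∑ s, |D s s'|) * |x s'| := by
        rw [Finset.sum_comm]; simp [Finset.sum_mul]
    _ ≤ ∑ s', c * |x s'| := by
        refine Finset.sum_le_sum fun s' _ => mul_le_mul_of_nonneg_right (hD s') (abs_nonneg _)
    _ = c * ∑ s', |x s'| := by rw [Finset.mul_sum]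

end helpers

/-- Proposition 2: if `D_TV^max(π_α, π̂_α) ≤ ε_π`, then
`‖d_ρ^{π̂_ν,π̂_α} - d_ρ^{π̂_ν,π_α}‖₁ ≤ 2γε_π/(1-γ)`. -/
theorem state_distribution_discrepancy {S Av Aa : Type*}
    [Fintype S] [Nonempty S] [DecidableEq S]
    [Fintype Av] [Nonempty Av] [Fintype Aa] [Nonempty Aa]
    (P : S → Av → Aa → S → ℝ)
    (hP0 : ∀ s av aa s', 0 ≤ P s av aa s')
    (hP1 : ∀ s av aa, ∑ s', P s av aa s' = 1)
    (γ : ℝ) (hγ0 : 0 ≤ γ) (hγ1 : γ < 1)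
    (ρ : S → ℝ) (hρ0 : ∀ s, 0 ≤ ρ s) (hρ1 : ∑ s, ρ s = 1)
    (ε : ℝ) (hε0 : 0 ≤ ε) (hε1 : ε ≤ 1)
    (pinuhat : S → Av → ℝ)
    (hpinuhat0 : ∀ s a, 0 ≤ pinuhat s a) (hpinuhat1 : ∀ s, ∑ a, pinuhat s a = 1)
    (pialpha pialphahat : S → Aa → ℝ)
    (hpialpha0 : ∀ s a, 0 ≤ pialpha s a) (hpialpha1 : ∀ s, ∑ a, pialpha s a = 1)
    (hpialphahat0 : ∀ s a, 0 ≤ pialphahat s a)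
    (hpialphahat1 : ∀ s, ∑ a, pialphahat s a = 1)
    (hTVmax : ∀ s, (1 / 2) * ∑ a, |pialpha s a - pialphahat s a| ≤ ε) :
    ∑ s, |stateVisitation P γ ρ pinuhat pialphahat s -
        stateVisitation P γ ρ pinuhat pialpha s| ≤ 2 * γ * ε / (1 - γ) := by
  set M := inducedMatrix P pinuhat pialphahat with hM
  set N := inducedMatrix P pinuhat pialpha with hNdef
  have h1γ : (0:ℝ) < 1 - γ := by linarith
  -- entrywise nonnegativity and column stochasticity
  have stoch : ∀ (q : S → Aa → ℝ), (∀ s a, 0 ≤ q s a) → (∀ s, ∑ a, q s a = 1) →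
      (∀ s' s, 0 ≤ inducedMatrix P pinuhat q s' s) ∧
      (∀ s, ∑ s', inducedMatrix P pinuhat q s' s = 1) := by
    intro q hq0 hq1
    constructor
    · intro s' s
      refine Finset.sum_nonneg fun av _ => Finset.sum_nonneg fun aa _ => ?_
      exact mul_nonneg (mul_nonneg (hpinuhat0 s av) (hq0 s aa)) (hP0 s av aa s')
    · intro s
      have : (∑ s', ∑ av, ∑ aa, pinuhat s av * q s aa * P s av aa s')
          = ∑ av, ∑ aa, pinuhat s av * q s aa * ∑ s', P s av aa s' := by
        rw [Finset.sum_comm]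
        refine Finset.sum_congr rfl fun av _ => ?_
        rw [Finset.sum_comm]
        refine Finset.sum_congr rfl fun aa _ => ?_
        rw [Finset.mul_sum]
      simp only [inducedMatrix, Matrix.of_apply]
      rw [this]
      simp only [hP1, mul_one, ← Finset.mul_sum, hq1, hpinuhat1]
  obtain ⟨hM0, hM1⟩ := stoch pialphahat hpialphahat0 hpialphahat1
  obtain ⟨hN0, hN1⟩ := stoch pialpha hpialpha0 hpialpha1
  -- column abs sum of M - N bounded by 2ε
  have hcol : ∀ s, ∑ s', |(M - N) s' s| ≤ 2 * ε := by
    intro s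
    have hdiff : ∀ s', (M - N) s' s
        = ∑ av, ∑ aa, pinuhat s av * (pialphahat s aa - pialpha s aa) * P s av aa s' := by
      intro s'
      simp only [Matrix.sub_apply, hM, hNdef, inducedMatrix, Matrix.of_apply,
        ← Finset.sum_sub_distrib]
      refine Finset.sum_congr rfl fun av _ => Finset.sum_congr rfl fun aa _ => by ring
    calc ∑ s', |(M - N) s' s|
        ≤ ∑ s', ∑ av, ∑ aa, pinuhat s av * |pialphahat s aa - pialpha s aa| * P s av aa s' := by
          refine Finset.sum_le_sum fun s' _ => ?_
          rw [hdiff s']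
          refine (Finset.abs_sum_le_sum_abs _ _).trans ?_
          refine Finset.sum_le_sum fun av _ => ?_
          refine (Finset.abs_sum_le_sum_abs _ _).trans ?_
          refine Finset.sum_le_sum fun aa _ => le_of_eq ?_
          rw [abs_mul, abs_mul, abs_of_nonneg (hpinuhat0 s av),
            abs_of_nonneg (hP0 s av aa s')]
      _ = ∑ av, ∑ aa, pinuhat s av * |pialphahat s aa - pialpha s aa| * ∑ s', P s av aa s' := by
          rw [Finset.sum_comm]
          refine Finset.sum_congr rfl fun av _ => ?_
          rw [Finset.sum_comm]
          refine Finset.sum_congr rfl fun aa _ => ?_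
          rw [Finset.mul_sum]
      _ = ∑ aa, |pialphahat s aa - pialpha s aa| := by
          simp only [hP1, mul_one, ← Finset.mul_sum]
          rw [← Finset.sum_mul, hpinuhat1, one_mul]
      _ ≤ 2 * ε := by
          have := hTVmax s
          have heq : ∑ aa, |pialphahat s aa - pialpha s aa|
              = ∑ aa, |pialpha s aa - pialphahat s aa| := by
            refine Finset.sum_congr rfl fun aa _ => (abs_sub_comm _ _)
          rw [heq]; linarith
  -- ℓ¹ norms of K^t ρ are at most 1
  have hρl1 : ∑ s, |ρ s| = 1 := by
    rw [← hρ1]; exact Finset.sum_congr rfl fun s _ => abs_of_nonneg (hρ0 s)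
  have hKt : ∀ (K : Matrix S S ℝ), (∀ s' s, 0 ≤ K s' s) → (∀ s, ∑ s', K s' s = 1) →
      ∀ t : ℕ, ∑ s, |((K ^ t) *ᵥ ρ) s| ≤ 1 := by
    intro K hK0 hK1 t
    induction t with
    | zero => simp [hρl1]
    | succ t ih =>
      have : (K ^ (t + 1)) *ᵥ ρ = K *ᵥ ((K ^ t) *ᵥ ρ) := by
        rw [Matrix.mulVec_mulVec, ← pow_succ']
      rw [this]
      exact (l1_contract K hK0 hK1 _).trans ih
  have hMt := hKt M hM0 hM1
  have hNt := hKt N hN0 hN1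
  -- key induction: ℓ¹ distance of iterates grows at most linearly
  have key : ∀ t : ℕ, ∑ s, |((M ^ t) *ᵥ ρ) s - ((N ^ t) *ᵥ ρ) s| ≤ 2 * ε * t := by
    intro t
    induction t with
    | zero => simp
    | succ t ih =>
      have hsplit : ∀ s, ((M ^ (t+1)) *ᵥ ρ) s - ((N ^ (t+1)) *ᵥ ρ) s
          = (M *ᵥ (((M ^ t) *ᵥ ρ) - ((N ^ t) *ᵥ ρ))) s + ((M - N) *ᵥ ((N ^ t) *ᵥ ρ)) s := by
        intro s
        have e1 : (M ^ (t + 1)) *ᵥ ρ = M *ᵥ ((M ^ t) *ᵥ ρ) := by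
          rw [Matrix.mulVec_mulVec, ← pow_succ']
        have e2 : (N ^ (t + 1)) *ᵥ ρ = N *ᵥ ((N ^ t) *ᵥ ρ) := by
          rw [Matrix.mulVec_mulVec, ← pow_succ']
        rw [e1, e2, Matrix.mulVec_sub, Matrix.sub_mulVec]
        simp
      calc ∑ s, |((M ^ (t+1)) *ᵥ ρ) s - ((N ^ (t+1)) *ᵥ ρ) s|
          ≤ ∑ s, (|(M *ᵥ (((M ^ t) *ᵥ ρ) - ((N ^ t) *ᵥ ρ))) s|
              + |((M - N) *ᵥ ((N ^ t) *ᵥ ρ)) s|) := by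
            refine Finset.sum_le_sum fun s _ => ?_
            rw [hsplit s]; exact abs_add_le _ _
        _ = (∑ s, |(M *ᵥ (((M ^ t) *ᵥ ρ) - ((N ^ t) *ᵥ ρ))) s|)
              + ∑ s, |((M - N) *ᵥ ((N ^ t) *ᵥ ρ)) s| := Finset.sum_add_distrib
        _ ≤ (∑ s, |((M ^ t) *ᵥ ρ) s - ((N ^ t) *ᵥ ρ) s|) + 2 * ε * 1 := by
            refine add_le_add ?_ ?_
            · have := l1_contract M hM0 hM1 (((M ^ t) *ᵥ ρ) - ((N ^ t) *ᵥ ρ))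
              simpa using this
            · exact (l1_bound (M - N) (2 * ε) hcol _).trans
                (mul_le_mul_of_nonneg_left (hNt t) (by linarith))
        _ ≤ 2 * ε * t + 2 * ε * 1 := by linarith
        _ = 2 * ε * (t + 1 : ℕ) := by push_cast; ring
  -- summability
  have hgeo : Summable fun t : ℕ => γ ^ t := summable_geometric_of_lt_one hγ0 hγ1
  have habs : ∀ (K : Matrix S S ℝ), (∀ t : ℕ, ∑ s, |((K ^ t) *ᵥ ρ) s| ≤ 1) →
      ∀ s : S, ∀ t : ℕ, |((K ^ t) *ᵥ ρ) s| ≤ 1 := by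
    intro K hK s t
    refine le_trans ?_ (hK t)
    exact Finset.single_le_sum (f := fun i => |((K ^ t) *ᵥ ρ) i|) (fun i _ => abs_nonneg _) (Finset.mem_univ s)
  have hMe := habs M hMt
  have hNe := habs N hNt
  have hsumM : ∀ s : S, Summable fun t : ℕ => γ ^ t * ((M ^ t) *ᵥ ρ) s := by
    intro s
    refine Summable.of_norm_bounded hgeo fun t => ?_
    rw [Real.norm_eq_abs, abs_mul, abs_pow, abs_of_nonneg hγ0]
    calc γ ^ t * |((M ^ t) *ᵥ ρ) s| ≤ γ ^ t * 1 :=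
          mul_le_mul_of_nonneg_left (hMe s t) (pow_nonneg hγ0 t)
      _ = γ ^ t := mul_one _
  have hsumN : ∀ s : S, Summable fun t : ℕ => γ ^ t * ((N ^ t) *ᵥ ρ) s := by
    intro s
    refine Summable.of_norm_bounded hgeo fun t => ?_
    rw [Real.norm_eq_abs, abs_mul, abs_pow, abs_of_nonneg hγ0]
    calc γ ^ t * |((N ^ t) *ᵥ ρ) s| ≤ γ ^ t * 1 :=
          mul_le_mul_of_nonneg_left (hNe s t) (pow_nonneg hγ0 t)
      _ = γ ^ t := mul_one _
  have hsumMPi : Summable fun t : ℕ => γ ^ t • ((M ^ t) *ᵥ ρ) := by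
    refine Pi.summable.mpr fun s => ?_
    simpa [smul_eq_mul] using hsumM s
  have hsumNPi : Summable fun t : ℕ => γ ^ t • ((N ^ t) *ᵥ ρ) := by
    refine Pi.summable.mpr fun s => ?_
    simpa [smul_eq_mul] using hsumN s
  -- pointwise formula for stateVisitation
  have hsvM : ∀ s, stateVisitation P γ ρ pinuhat pialphahat s
      = (1 - γ) * ∑' t : ℕ, γ ^ t * ((M ^ t) *ᵥ ρ) s := by
    intro s
    simp only [stateVisitation, Pi.smul_apply, smul_eq_mul, ← hM]
    rw [tsum_apply hsumMPi]
    simp [smul_eq_mul]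
  have hsvN : ∀ s, stateVisitation P γ ρ pinuhat pialpha s
      = (1 - γ) * ∑' t : ℕ, γ ^ t * ((N ^ t) *ᵥ ρ) s := by
    intro s
    simp only [stateVisitation, Pi.smul_apply, smul_eq_mul, ← hNdef]
    rw [tsum_apply hsumNPi]
    simp [smul_eq_mul]
  -- abs of termwise difference, summable
  have hd : ∀ s : S, Summable fun t : ℕ =>
      |γ ^ t * ((M ^ t) *ᵥ ρ) s - γ ^ t * ((N ^ t) *ᵥ ρ) s| := by
    intro s
    refine Summable.of_norm_bounded (hgeo.mul_left 2) fun t => ?_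
    rw [Real.norm_eq_abs, abs_abs, ← mul_sub, abs_mul, abs_pow, abs_of_nonneg hγ0]
    calc γ ^ t * |((M ^ t) *ᵥ ρ) s - ((N ^ t) *ᵥ ρ) s|
        ≤ γ ^ t * 2 := by
          refine mul_le_mul_of_nonneg_left ?_ (pow_nonneg hγ0 t)
          calc |((M ^ t) *ᵥ ρ) s - ((N ^ t) *ᵥ ρ) s|
              ≤ |((M ^ t) *ᵥ ρ) s| + |((N ^ t) *ᵥ ρ) s| := abs_sub _ _
            _ ≤ 1 + 1 := add_le_add (hMe s t) (hNe s t)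
            _ = 2 := by norm_num
      _ = 2 * γ ^ t := mul_comm _ _
  -- main estimate
  have hrhs_summable : Summable fun t : ℕ => 2 * ε * (t * γ ^ t) := by
    have h1 : Summable fun t : ℕ => (t : ℝ) ^ 1 * γ ^ t :=
      summable_pow_mul_geometric_of_norm_lt_one 1
        (by rwa [Real.norm_eq_abs, abs_of_nonneg hγ0])
    simpa [pow_one] using h1.mul_left (2 * ε)
  calc ∑ s, |stateVisitation P γ ρ pinuhat pialphahat s -
        stateVisitation P γ ρ pinuhat pialpha s|
      = ∑ s, (1 - γ) * |∑' t : ℕ, (γ ^ t * ((M ^ t) *ᵥ ρ) s - γ ^ t * ((N ^ t) *ᵥ ρ) s)| := by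
        refine Finset.sum_congr rfl fun s _ => ?_
        rw [hsvM s, hsvN s, ← mul_sub, abs_mul, abs_of_pos h1γ,
          Summable.tsum_sub (hsumM s) (hsumN s)]
    _ ≤ ∑ s, (1 - γ) * ∑' t : ℕ, |γ ^ t * ((M ^ t) *ᵥ ρ) s - γ ^ t * ((N ^ t) *ᵥ ρ) s| := by
        refine Finset.sum_le_sum fun s _ => mul_le_mul_of_nonneg_left ?_ (le_of_lt h1γ)
        have := norm_tsum_le_tsum_norm (f := fun t : ℕ =>
          γ ^ t * ((M ^ t) *ᵥ ρ) s - γ ^ t * ((N ^ t) *ᵥ ρ) s) (by simpa [Real.norm_eq_abs] using hd s)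
        simpa [Real.norm_eq_abs] using this
    _ = (1 - γ) * ∑' t : ℕ, ∑ s, |γ ^ t * ((M ^ t) *ᵥ ρ) s - γ ^ t * ((N ^ t) *ᵥ ρ) s| := by
        rw [← Finset.mul_sum]
        congr 1
        rw [Summable.tsum_finsetSum (fun s _ => hd s)]
    _ ≤ (1 - γ) * ∑' t : ℕ, 2 * ε * (t * γ ^ t) := by
        refine mul_le_mul_of_nonneg_left ?_ (le_of_lt h1γ)
        refine Summable.tsum_le_tsum (fun t => ?_) (summable_sum fun s _ => hd s) hrhs_summable
        have : ∑ s, |γ ^ t * ((M ^ t) *ᵥ ρ) s - γ ^ t * ((N ^ t) *ᵥ ρ) s|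
            = γ ^ t * ∑ s, |((M ^ t) *ᵥ ρ) s - ((N ^ t) *ᵥ ρ) s| := by
          rw [Finset.mul_sum]
          refine Finset.sum_congr rfl fun s _ => ?_
          rw [← mul_sub, abs_mul, abs_pow, abs_of_nonneg hγ0]
        rw [this]
        calc γ ^ t * ∑ s, |((M ^ t) *ᵥ ρ) s - ((N ^ t) *ᵥ ρ) s|
            ≤ γ ^ t * (2 * ε * t) := mul_le_mul_of_nonneg_left (key t) (pow_nonneg hγ0 t)
          _ = 2 * ε * (t * γ ^ t) := by ring
    _ = (1 - γ) * (2 * ε * (γ / (1 - γ) ^ 2)) := by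
        rw [tsum_mul_left, tsum_coe_mul_geometric_of_norm_lt_one
          (by rwa [Real.norm_eq_abs, abs_of_nonneg hγ0] : ‖γ‖ < 1)]
    _ = 2 * γ * ε / (1 - γ) := by field_simp
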